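/- Let H be a complex Hilbert space and X, Y, Z, W : H → H bounded linear operators. Let T be the operator matrix on H ⊕ H given by T(x₁, x₂) = (X x₁ + Y x₂, Z x₁ + W x₂), and set S = Y*Y + ZZ*. Then w(T) ≤ max{w(X), w(W)} + ((1/16)‖S‖² + (1/4)w(ZY)² + (1/8)w(ZYS + S(ZY)))^{1/4}. -/

import Mathlib

open ComplexConjugate ContinuousLinearMap

noncomputable def numRadius {H : Type*} [NormedAddCommGroup H] [InnerProductSpace ℂ H]
    (T : H →L[ℂ] H) : ℝ :=
  sSup {r : ℝ | ∃ x : H, ‖x‖ = 1 ∧ r = ‖(inner ℂ (T x) x : ℂ)‖}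

local notation "⟪" x ", " y "⟫" => @inner ℂ _ _ x y

section aux
variable {H : Type*} [NormedAddCommGroup H] [InnerProductSpace ℂ H]

lemma numRadius_bdd (T : H →L[ℂ] H) :
    BddAbove {r : ℝ | ∃ x : H, ‖x‖ = 1 ∧ r = ‖(inner ℂ (T x) x : ℂ)‖} := by
  refine ⟨‖T‖, ?_⟩
  rintro r ⟨x, hx, rfl⟩
  calc ‖(⟪T x, x⟫)‖ ≤ ‖T x‖ * ‖x‖ := norm_inner_le_norm _ _
    _ ≤ ‖T‖ * ‖x‖ * ‖x‖ := by gcongr; exact T.le_opNorm x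
    _ = ‖T‖ := by rw [hx]; ring

lemma numRadius_nonneg (T : H →L[ℂ] H) : 0 ≤ numRadius T := by
  unfold numRadius
  by_cases h : {r : ℝ | ∃ x : H, ‖x‖ = 1 ∧ r = ‖(inner ℂ (T x) x : ℂ)‖}.Nonempty
  · obtain ⟨r, x, hx, hr⟩ := h
    exact le_trans (by rw [hr]; positivity) (le_csSup (numRadius_bdd T) ⟨x, hx, hr⟩)
  · rw [Set.not_nonempty_iff_eq_empty.mp h, Real.sSup_empty]

lemma numRadius_inner_le (T : H →L[ℂ] H) (x : H) :
    ‖(⟪T x, x⟫)‖ ≤ numRadius T * ‖x‖ ^ 2 := by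
  rcases eq_or_ne x 0 with rfl | hx
  · simp
  · have hn : ‖x‖ ≠ 0 := norm_ne_zero_iff.mpr hx
    set y := ((‖x‖⁻¹ : ℝ) : ℂ) • x with hy
    have hy1 : ‖y‖ = 1 := by
      rw [hy, norm_smul]
      simp [hn]
    have hle : ‖(⟪T y, y⟫)‖ ≤ numRadius T :=
      le_csSup (numRadius_bdd T) ⟨y, hy1, rfl⟩
    have hval : ‖(⟪T y, y⟫)‖ = ‖x‖⁻¹ ^ 2 * ‖(⟪T x, x⟫)‖ := by
      rw [hy]
      simp only [map_smul, inner_smul_left, inner_smul_right]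
      rw [norm_mul, norm_mul]
      simp [sq]
      ring
    rw [hval] at hle
    have h2 := mul_le_mul_of_nonneg_right hle (by positivity : (0:ℝ) ≤ ‖x‖ ^ 2)
    calc ‖(⟪T x, x⟫)‖ = ‖x‖⁻¹ ^ 2 * ‖(⟪T x, x⟫)‖ * ‖x‖ ^ 2 := by
          field_simp
      _ ≤ numRadius T * ‖x‖ ^ 2 := h2

variable [CompleteSpace H]

/-- A self-adjoint operator bounded in numerical-radius sense is norm bounded. -/
lemma selfadj_norm_le (A : H →L[ℂ] H) (hA : adjoint A = A) {c : ℝ} (hc : 0 ≤ c)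
    (h : ∀ y : H, ‖(⟪A y, y⟫)‖ ≤ c * ‖y‖ ^ 2) (y : H) : ‖A y‖ ≤ c * ‖y‖ := by
  have key : ∀ x z : H, ⟪A x, z⟫ = conj ⟪A z, x⟫ := by
    intro x z
    conv_rhs => rw [← hA, adjoint_inner_left]
    exact (inner_conj_symm _ _).symm
  have stepA : ∀ x z : H, Complex.re (⟪A z, x⟫) ≤ c / 2 * (‖x‖ ^ 2 + ‖z‖ ^ 2) := by
    intro x z
    have E1 : ⟪A (x + z), x + z⟫ = ⟪A x, x⟫ + ⟪A x, z⟫ + ⟪A z, x⟫ + ⟪A z, z⟫ := by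
      simp only [map_add, inner_add_left, inner_add_right]; ring
    have E2 : ⟪A (x - z), x - z⟫ = ⟪A x, x⟫ - ⟪A x, z⟫ - ⟪A z, x⟫ + ⟪A z, z⟫ := by
      simp only [map_sub, inner_sub_left, inner_sub_right]; ring
    have E3 : ⟪A x, z⟫ + ⟪A z, x⟫ = 2 * ((Complex.re (⟪A z, x⟫) : ℝ) : ℂ) := by
      rw [key x z, add_comm, Complex.add_conj]
      push_cast
      ring
    have e1 : ⟪A (x + z), x + z⟫ - ⟪A (x - z), x - z⟫
        = ((4 * Complex.re (⟪A z, x⟫) : ℝ) : ℂ) := by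
      rw [E1, E2]
      push_cast
      linear_combination 2 * E3
    have e2 : Complex.re (⟪A (x + z), x + z⟫) - Complex.re (⟪A (x - z), x - z⟫)
        = 4 * Complex.re (⟪A z, x⟫) := by
      rw [← Complex.sub_re, e1, Complex.ofReal_re]
    have b1 : Complex.re (⟪A (x + z), x + z⟫) ≤ c * ‖x + z‖ ^ 2 :=
      le_trans (Complex.re_le_norm _) (le_trans (le_of_eq rfl)
        (h (x + z)))
    have b2 : -Complex.re (⟪A (x - z), x - z⟫) ≤ c * ‖x - z‖ ^ 2 := by
      have h1 : |Complex.re (⟪A (x - z), x - z⟫)| ≤ c * ‖x - z‖ ^ 2 :=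
        le_trans (Complex.abs_re_le_norm _) (le_trans (le_of_eq rfl)
          (h (x - z)))
      linarith [neg_abs_le (Complex.re (⟪A (x - z), x - z⟫))]
    have par : ‖x + z‖ ^ 2 + ‖x - z‖ ^ 2 = 2 * (‖x‖ ^ 2 + ‖z‖ ^ 2) := by
      have ha := @norm_add_sq ℂ _ _ _ _ x z
      have hb := @norm_sub_sq ℂ _ _ _ _ x z
      linarith
    nlinarith [mul_le_mul_of_nonneg_left (le_of_eq par) hc]
  have stepB : ∀ x z : H, Complex.re (⟪A z, x⟫) ≤ c * ‖x‖ * ‖z‖ := by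
    intro x z
    rcases eq_or_ne x 0 with rfl | hx
    · simp
    rcases eq_or_ne z 0 with rfl | hz
    · simp
    have hxn : (0:ℝ) < ‖x‖ := norm_pos_iff.mpr hx
    have hzn : (0:ℝ) < ‖z‖ := norm_pos_iff.mpr hz
    set τ : ℝ := Real.sqrt (‖z‖ / ‖x‖) with hτ
    have hτp : 0 < τ := Real.sqrt_pos.mpr (by positivity)
    have hτ2 : τ ^ 2 = ‖z‖ / ‖x‖ := Real.sq_sqrt (by positivity)
    have hre : Complex.re (⟪A (((τ⁻¹ : ℝ) : ℂ) • z), ((τ : ℝ) : ℂ) • x⟫)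
        = Complex.re (⟪A z, x⟫) := by
      rw [map_smul, inner_smul_left, inner_smul_right, Complex.conj_ofReal]
      rw [← mul_assoc, ← Complex.ofReal_mul, inv_mul_cancel₀ (ne_of_gt hτp)]
      simp
    have := stepA (((τ : ℝ) : ℂ) • x) (((τ⁻¹ : ℝ) : ℂ) • z)
    rw [hre] at this
    have hnx : ‖((τ : ℝ) : ℂ) • x‖ ^ 2 = τ ^ 2 * ‖x‖ ^ 2 := by
      rw [norm_smul]; simp [abs_of_pos hτp]; ring
    have hnz : ‖((τ⁻¹ : ℝ) : ℂ) • z‖ ^ 2 = τ⁻¹ ^ 2 * ‖z‖ ^ 2 := by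
      rw [norm_smul]; simp [abs_of_pos hτp]; ring
    rw [hnx, hnz, hτ2] at this
    have hinv : τ⁻¹ ^ 2 = ‖x‖ / ‖z‖ := by
      rw [inv_pow, hτ2]
      field_simp
    rw [hinv] at this
    calc Complex.re (⟪A z, x⟫)
        ≤ c / 2 * (‖z‖ / ‖x‖ * ‖x‖ ^ 2 + ‖x‖ / ‖z‖ * ‖z‖ ^ 2) := this
      _ = c * ‖x‖ * ‖z‖ := by field_simp; ring
  rcases eq_or_ne (A y) 0 with hAy | hAy
  · rw [hAy]; simp; positivity
  · have hAyn : (0:ℝ) < ‖A y‖ := norm_pos_iff.mpr hAy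
    have h1 : ‖A y‖ ^ 2 ≤ c * ‖A y‖ * ‖y‖ := by
      have h2 := stepB (A y) y
      have h3 : ⟪A y, A y⟫ = ((‖A y‖ ^ 2 : ℝ) : ℂ) := by
        rw [inner_self_eq_norm_sq_to_K]; norm_cast
      rw [h3, Complex.ofReal_re] at h2
      exact h2
    nlinarith
end aux
set_option maxHeartbeats 2000000 in
theorem numRadius_operator_matrix_upper
    {H : Type*} [NormedAddCommGroup H] [InnerProductSpace ℂ H] [CompleteSpace H]
    (X Y Z W : H →L[ℂ] H)
    (T : WithLp 2 (H × H) →L[ℂ] WithLp 2 (H × H))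
    (hT : ∀ x : WithLp 2 (H × H),
      WithLp.equiv 2 (H × H) (T x) =
        (X (WithLp.equiv 2 (H × H) x).1 + Y (WithLp.equiv 2 (H × H) x).2,
         Z (WithLp.equiv 2 (H × H) x).1 + W (WithLp.equiv 2 (H × H) x).2))
    (S : H →L[ℂ] H)
    (hS : S = (ContinuousLinearMap.adjoint Y).comp Y + Z.comp (ContinuousLinearMap.adjoint Z)) :
    numRadius T ≤ max (numRadius X) (numRadius W) +
      ((1 / 16 : ℝ) * ‖S‖ ^ 2 + (1 / 4 : ℝ) * (numRadius (Z.comp Y)) ^ 2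
        + (1 / 8 : ℝ) * numRadius ((Z.comp Y).comp S + S.comp (Z.comp Y))) ^ ((1 : ℝ) / 4) := by
  classical
  set P : H →L[ℂ] H := Z.comp Y with hPdef
  set N : H →L[ℂ] H := P.comp S + S.comp P with hNdef
  set wP : ℝ := numRadius P with hwP
  set wN : ℝ := numRadius N with hwN
  have hwPn : 0 ≤ wP := numRadius_nonneg P
  have hwNn : 0 ≤ wN := numRadius_nonneg N
  set M : ℝ := max (numRadius X) (numRadius W) with hM
  have hMn : 0 ≤ M := le_trans (numRadius_nonneg X) (le_max_left _ _)
  set expr : ℝ := (1 / 16 : ℝ) * ‖S‖ ^ 2 + (1 / 4 : ℝ) * wP ^ 2 + (1 / 8 : ℝ) * wN with hexpr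
  have hexprn : 0 ≤ expr := by positivity
  have hSadj : adjoint S = S := by
    rw [hS, map_add, adjoint_comp, adjoint_comp, adjoint_adjoint, adjoint_adjoint]
  have hSinner : ∀ y z : H, ⟪S y, z⟫ = ⟪y, S z⟫ := by
    intro y z
    conv_lhs => rw [← hSadj]
    exact adjoint_inner_left S z y
  have hadj_smul : ∀ (a : ℂ) (B : H →L[ℂ] H), adjoint (a • B) = conj a • adjoint B := by
    intro a B
    rw [← star_eq_adjoint, ← star_eq_adjoint, star_smul]
    rfl
  -- main supremum argument
  apply Real.sSup_le _ (by positivity)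
  rintro r ⟨x, hx, rfl⟩
  set x1 : H := (WithLp.equiv 2 (H × H) x).1 with hx1
  set x2 : H := (WithLp.equiv 2 (H × H) x).2 with hx2
  set s : ℝ := ‖x1‖ ^ 2 with hsdef
  set t : ℝ := ‖x2‖ ^ 2 with htdef
  have hsn : 0 ≤ s := sq_nonneg _
  have htn : 0 ≤ t := sq_nonneg _
  have hst : s + t = 1 := by
    have := WithLp.prod_norm_sq_eq_of_L2 x
    rw [hx] at this
    rw [hsdef, htdef, hx1, hx2]
    rw [one_pow] at this
    exact this.symm
  have hT1 : (T x).fst = X x1 + Y x2 := by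
    have := congrArg Prod.fst (hT x)
    exact this
  have hT2 : (T x).snd = Z x1 + W x2 := by
    have := congrArg Prod.snd (hT x)
    exact this
  set u : ℂ := ⟪Y x2, x1⟫ with hu
  set v : ℂ := ⟪Z x1, x2⟫ with hv
  have hx1fst : x.fst = x1 := rfl
  have hx2snd : x.snd = x2 := rfl
  have hinner : (⟪T x, x⟫ : ℂ) = (⟪X x1, x1⟫ + ⟪W x2, x2⟫) + (u + v) := by
    rw [WithLp.prod_inner_apply]
    change ⟪(T x).fst, x.fst⟫ + ⟪(T x).snd, x.snd⟫ = _
    rw [hT1, hT2, hx1fst, hx2snd, inner_add_left, inner_add_left]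
    ring
  -- diagonal part
  have hdiag : ‖(⟪X x1, x1⟫ + ⟪W x2, x2⟫ : ℂ)‖ ≤ M := by
    calc ‖(⟪X x1, x1⟫ + ⟪W x2, x2⟫ : ℂ)‖
        ≤ ‖(⟪X x1, x1⟫ : ℂ)‖ + ‖(⟪W x2, x2⟫ : ℂ)‖ := norm_add_le _ _
      _ ≤ numRadius X * s + numRadius W * t := by
          gcongr
          · exact numRadius_inner_le X x1
          · exact numRadius_inner_le W x2
      _ ≤ M * s + M * t := by
          gcongr
          · exact le_max_left _ _
          · exact le_max_right _ _
      _ = M := by rw [← mul_add, hst, mul_one]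
  -- off-diagonal part
  set μ : ℂ := if u = 0 then 1 else (‖u‖ : ℂ) / u with hμdef
  have hμu : μ * u = (‖u‖ : ℂ) := by
    rw [hμdef]
    split_ifs with h
    · simp [h]
    · rw [div_mul_cancel₀ _ h]
  have hμ1 : ‖μ‖ = 1 := by
    rw [hμdef]
    split_ifs with h
    · simp
    · have hn : ‖u‖ ≠ 0 := norm_ne_zero_iff.mpr h
      rw [norm_div, Complex.norm_real, Real.norm_of_nonneg (norm_nonneg u), div_self hn]
  set v' : ℂ := ⟪(adjoint Z) x2, x1⟫ with hv'def
  have hv'v : ‖v'‖ = ‖v‖ := by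
    rw [hv'def, adjoint_inner_left, hv]
    exact norm_inner_symm _ _
  set ν : ℂ := if v' = 0 then 1 else (‖v'‖ : ℂ) / v' with hνdef
  have hνv : ν * v' = (‖v'‖ : ℂ) := by
    rw [hνdef]
    split_ifs with h
    · simp [h]
    · rw [div_mul_cancel₀ _ h]
  have hν1 : ‖ν‖ = 1 := by
    rw [hνdef]
    split_ifs with h
    · simp
    · have hn : ‖v'‖ ≠ 0 := norm_ne_zero_iff.mpr h
      rw [norm_div, Complex.norm_real, Real.norm_of_nonneg (norm_nonneg v'), div_self hn]
  set F : H →L[ℂ] H := (conj μ) • Y + (conj ν) • (adjoint Z) with hFdef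
  have hF : (⟪F x2, x1⟫ : ℂ) = ((‖u‖ + ‖v‖ : ℝ) : ℂ) := by
    rw [hFdef]
    simp only [ContinuousLinearMap.add_apply, ContinuousLinearMap.coe_smul',
      Pi.smul_apply, inner_add_left, inner_smul_left, Complex.conj_conj]
    rw [← hu, ← hv'def, hμu, hνv, hv'v]
    push_cast
    ring
  have step1 : ‖u + v‖ ≤ ‖F x2‖ * ‖x1‖ := by
    calc ‖u + v‖ ≤ ‖u‖ + ‖v‖ := norm_add_le _ _
      _ = ‖(⟪F x2, x1⟫ : ℂ)‖ := by
          rw [hF, Complex.norm_real, Real.norm_of_nonneg (by positivity : (0:ℝ) ≤ ‖u‖ + ‖v‖)]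
      _ ≤ ‖F x2‖ * ‖x1‖ := norm_inner_le_norm _ _
  set G : H →L[ℂ] H := (adjoint F).comp F with hGdef
  have hG : (⟪G x2, x2⟫ : ℂ) = ((‖F x2‖ ^ 2 : ℝ) : ℂ) := by
    rw [hGdef]
    show (⟪adjoint F (F x2), x2⟫ : ℂ) = _
    rw [adjoint_inner_left, inner_self_eq_norm_sq_to_K]
    norm_cast
  have step2 : ‖F x2‖ ^ 2 ≤ ‖G x2‖ * ‖x2‖ := by
    have h1 := norm_inner_le_norm (𝕜 := ℂ) (G x2) x2
    rw [hG, Complex.norm_real, Real.norm_of_nonneg (by positivity : (0:ℝ) ≤ ‖F x2‖ ^ 2)] at h1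
    exact h1
  set c : ℂ := ν * conj μ with hcdef
  have hc1 : ‖c‖ = 1 := by
    rw [hcdef, norm_mul, hν1]
    simp [hμ1]
  set R' : H →L[ℂ] H := c • P + (conj c) • (adjoint P) with hR'def
  have hμμ : μ * conj μ = 1 := by
    rw [Complex.mul_conj', hμ1]
    norm_num
  have hνν : ν * conj ν = 1 := by
    rw [Complex.mul_conj', hν1]
    norm_num
  have hGeq : G = S + R' := by
    have hFadj : adjoint F = μ • (adjoint Y) + ν • Z := by
      rw [hFdef, map_add, hadj_smul, hadj_smul, adjoint_adjoint, Complex.conj_conj,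
        Complex.conj_conj]
    rw [hGdef, hFadj, hFdef]
    have expand : (μ • adjoint Y + ν • Z).comp ((conj μ) • Y + (conj ν) • (adjoint Z))
        = (μ * conj μ) • ((adjoint Y).comp Y) + (μ * conj ν) • ((adjoint Y).comp (adjoint Z))
          + (ν * conj μ) • (Z.comp Y) + (ν * conj ν) • (Z.comp (adjoint Z)) := by
      simp only [ContinuousLinearMap.add_comp, ContinuousLinearMap.comp_add,
        ContinuousLinearMap.smul_comp, ContinuousLinearMap.comp_smul, smul_add, smul_smul]
      module
    rw [expand, hμμ, hνν, ← adjoint_comp, hS, hR'def, hPdef]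
    have : μ * conj ν = conj (ν * conj μ) := by
      rw [map_mul, Complex.conj_conj]
      ring
    rw [this, ← hcdef, ← hPdef]
    simp only [one_smul]
    abel
  have hR'adj : adjoint R' = R' := by
    rw [hR'def, map_add, hadj_smul, hadj_smul, adjoint_adjoint, Complex.conj_conj]
    abel
  have hR'bound : ∀ y : H, ‖(⟪R' y, y⟫ : ℂ)‖ ≤ (2 * wP) * ‖y‖ ^ 2 := by
    intro y
    have h1 : (⟪R' y, y⟫ : ℂ) = conj c * ⟪P y, y⟫ + c * ⟪y, P y⟫ := by
      rw [hR'def]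
      simp only [ContinuousLinearMap.add_apply, ContinuousLinearMap.coe_smul',
        Pi.smul_apply, inner_add_left, inner_smul_left, Complex.conj_conj,
        adjoint_inner_left]
    calc ‖(⟪R' y, y⟫ : ℂ)‖ ≤ ‖conj c * ⟪P y, y⟫‖ + ‖c * ⟪y, P y⟫‖ := by
          rw [h1]; exact norm_add_le _ _
      _ = 2 * ‖(⟪P y, y⟫ : ℂ)‖ := by
          rw [norm_mul, norm_mul, RCLike.norm_conj, hc1,
            norm_inner_symm y (P y)]
          ring
      _ ≤ 2 * (wP * ‖y‖ ^ 2) := by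
          have := numRadius_inner_le P y
          linarith
      _ = (2 * wP) * ‖y‖ ^ 2 := by ring
  have hR'norm : ‖R' x2‖ ≤ 2 * wP * ‖x2‖ :=
    selfadj_norm_le R' hR'adj (by positivity) hR'bound x2
  -- cross term
  have hcross : 2 * Complex.re (⟪S x2, R' x2⟫ : ℂ) ≤ 2 * wN * t := by
    set α : ℂ := ⟪(S.comp P) x2, x2⟫ with hα
    set β : ℂ := ⟪(P.comp S) x2, x2⟫ with hβ
    have hcompSP : (⟪(S.comp P) x2, x2⟫ : ℂ) = ⟪P x2, S x2⟫ := by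
      rw [ContinuousLinearMap.comp_apply]
      exact hSinner (P x2) x2
    have hαe : (⟪S x2, P x2⟫ : ℂ) = conj α := by
      rw [hα, hcompSP]
      exact (inner_conj_symm (S x2) (P x2)).symm
    have hβe : (⟪S x2, (adjoint P) x2⟫ : ℂ) = β := by
      calc (⟪S x2, (adjoint P) x2⟫ : ℂ)
          = conj (⟪(adjoint P) x2, S x2⟫ : ℂ) := (inner_conj_symm _ _).symm
        _ = conj (⟪x2, P (S x2)⟫ : ℂ) := by rw [adjoint_inner_left]
        _ = ⟪P (S x2), x2⟫ := inner_conj_symm _ _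
        _ = β := by rw [hβ]; rfl
    have hz : (⟪S x2, R' x2⟫ : ℂ) = c * conj α + conj c * β := by
      rw [hR'def]
      simp only [ContinuousLinearMap.add_apply, ContinuousLinearMap.coe_smul',
        Pi.smul_apply, inner_add_right, inner_smul_right]
      rw [hαe, hβe]
    have hre : Complex.re (⟪S x2, R' x2⟫ : ℂ) = Complex.re (conj c * (α + β)) := by
      rw [hz]
      simp only [Complex.add_re, Complex.add_im, Complex.mul_re, Complex.mul_im,
        Complex.conj_re, Complex.conj_im]
      ring
    have hαβ : α + β = ⟪N x2, x2⟫ := by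
      rw [hα, hβ, hNdef, ← inner_add_left]
      congr 1
      rw [ContinuousLinearMap.add_apply]
      abel
    have hb : Complex.re (conj c * (α + β)) ≤ wN * t := by
      calc Complex.re (conj c * (α + β)) ≤ ‖conj c * (α + β)‖ := by
            exact Complex.re_le_norm _
        _ = ‖(⟪N x2, x2⟫ : ℂ)‖ := by
            rw [norm_mul, RCLike.norm_conj, hc1, one_mul, hαβ]
        _ ≤ wN * t := numRadius_inner_le N x2
    rw [hre]
    linarith
  set K : ℝ := ‖S‖ ^ 2 + 4 * wP ^ 2 + 2 * wN with hK
  have hKn : 0 ≤ K := by positivity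
  have hGx2 : G x2 = S x2 + R' x2 := by rw [hGeq]; rfl
  have hGnormsq : ‖G x2‖ ^ 2 ≤ K * t := by
    rw [hGx2]
    have hns := @norm_add_sq ℂ _ _ _ _ (S x2) (R' x2)
    rw [RCLike.re_to_complex] at hns
    have hS2 : ‖S x2‖ ^ 2 ≤ ‖S‖ ^ 2 * t := by
      have := S.le_opNorm x2
      rw [htdef]
      nlinarith [norm_nonneg (S x2), norm_nonneg x2, opNorm_nonneg S]
    have hR2 : ‖R' x2‖ ^ 2 ≤ 4 * wP ^ 2 * t := by
      rw [htdef]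
      nlinarith [norm_nonneg (R' x2), norm_nonneg x2]
    rw [hK]
    nlinarith [hcross]
  -- combine off-diagonal
  have h4 : ‖u + v‖ ^ 4 ≤ K * (t * s) ^ 2 := by
    have a1 : ‖u + v‖ ^ 4 ≤ (‖F x2‖ * ‖x1‖) ^ 4 :=
      pow_le_pow_left₀ (norm_nonneg _) step1 4
    have a2 : (‖F x2‖ ^ 2) ^ 2 ≤ (‖G x2‖ * ‖x2‖) ^ 2 :=
      pow_le_pow_left₀ (by positivity) step2 2
    have a3 : (‖G x2‖ * ‖x2‖) ^ 2 = ‖G x2‖ ^ 2 * t := by rw [htdef]; ring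
    calc ‖u + v‖ ^ 4 ≤ (‖F x2‖ * ‖x1‖) ^ 4 := a1
      _ = (‖F x2‖ ^ 2) ^ 2 * s ^ 2 := by rw [hsdef]; ring
      _ ≤ (‖G x2‖ * ‖x2‖) ^ 2 * s ^ 2 := by gcongr
      _ = ‖G x2‖ ^ 2 * t * s ^ 2 := by rw [a3]
      _ ≤ (K * t) * t * s ^ 2 :=
          mul_le_mul_of_nonneg_right (mul_le_mul_of_nonneg_right hGnormsq htn) (sq_nonneg s)
      _ = K * (t * s) ^ 2 := by ring
  have hts : t * s ≤ 1 / 4 := by nlinarith [sq_nonneg (s - t)]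
  have h5 : ‖u + v‖ ^ 4 ≤ expr := by
    have : K * (t * s) ^ 2 ≤ K * (1 / 4) ^ 2 := by
      gcongr
    have hKe : K * (1 / 4 : ℝ) ^ 2 = expr := by rw [hK, hexpr]; ring
    exact le_trans h4 (le_trans this (le_of_eq hKe))
  have h7 : ‖u + v‖ ≤ expr ^ ((1 : ℝ) / 4) := by
    have h0 : (0 : ℝ) ≤ ‖u + v‖ := norm_nonneg _
    calc ‖u + v‖ = ((‖u + v‖ ^ (4 : ℕ) : ℝ)) ^ ((1 : ℝ) / 4) := by
          rw [← Real.rpow_natCast (‖u + v‖) 4, ← Real.rpow_mul h0]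
          norm_num
      _ ≤ expr ^ ((1 : ℝ) / 4) := Real.rpow_le_rpow (by positivity) h5 (by norm_num)
  -- final combination
  calc ‖(⟪T x, x⟫ : ℂ)‖ = ‖((⟪X x1, x1⟫ + ⟪W x2, x2⟫) + (u + v) : ℂ)‖ := by rw [hinner]
    _ ≤ ‖(⟪X x1, x1⟫ + ⟪W x2, x2⟫ : ℂ)‖ + ‖u + v‖ := norm_add_le _ _
    _ ≤ M + expr ^ ((1 : ℝ) / 4) := add_le_add hdiag h7
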